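/- Let G = ⟨γ, δ | [δγδ⁻¹, γ] = 1, (δ⁻¹γδ)(δγδ⁻¹) = γ³⟩. Every character ξ : G → ℂ* satisfies ξ(γ) = 1. For a nontrivial character ξ, set t = ξ(δ) (so t ≠ 1); then dim_ℂ H¹(G; ℂ_ξ) = 1 if t² − 3t + 1 = 0, and dim_ℂ H¹(G; ℂ_ξ) = 0 otherwise. In particular the nontrivial part of the first characteristic variety of G consists exactly of the two (non-torsion) characters with ξ(δ) a root of t² − 3t + 1. -/

import Mathlib

/-- the one-dimensional representation `ℂ_ξ` attached to a character `ξ : G → ℂ*` -/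
noncomputable def charRep {G : Type} [Group G] (ξ : G →* ℂˣ) : Rep ℂ G :=
  Rep.of
    { toFun := fun g => (ξ g : ℂ) • (LinearMap.id : ℂ →ₗ[ℂ] ℂ)
      map_one' := by simp [Module.End.one_eq_id]
      map_mul' := fun g h => by
        ext
        simp [mul_smul, Module.End.mul_apply, mul_comm] }

/-- `dim_ℂ H¹(G; ℂ_ξ)` -/
noncomputable def h1dim {G : Type} [Group G] (ξ : G →* ℂˣ) : ℕ :=
  Module.finrank ℂ (groupCohomology (charRep ξ) 1)

/-- the two generators `γ, δ` -/
inductive GenGD : Type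
  | g | d

open scoped commutatorElement in
open GenGD in
/-- the relators `[δγδ⁻¹, γ], (δ⁻¹γδ)(δγδ⁻¹)(γ³)⁻¹` -/
def relsGD : Set (FreeGroup GenGD) :=
  { ⁅FreeGroup.of d * FreeGroup.of g * (FreeGroup.of d)⁻¹, FreeGroup.of g⁆,
    ((FreeGroup.of d)⁻¹ * FreeGroup.of g * FreeGroup.of d) *
      (FreeGroup.of d * FreeGroup.of g * (FreeGroup.of d)⁻¹) *
        (FreeGroup.of g ^ 3)⁻¹ }

open GenGD
open scoped commutatorElement

abbrev Gp := PresentedGroup relsGD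

lemma mk_rel_one {r : FreeGroup GenGD} (hr : r ∈ relsGD) :
    PresentedGroup.mk relsGD r = 1 :=
  (QuotientGroup.eq_one_iff r).2 (Subgroup.subset_normalClosure hr)

lemma rel2_eq_one :
    ((PresentedGroup.of d : Gp)⁻¹ * .of g * .of d) * (.of d * .of g * (.of d)⁻¹)
      * ((PresentedGroup.of g : Gp) ^ 3)⁻¹ = 1 := by
  have := mk_rel_one (r := ((FreeGroup.of d)⁻¹ * FreeGroup.of g * FreeGroup.of d) *
      (FreeGroup.of d * FreeGroup.of g * (FreeGroup.of d)⁻¹) *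
        (FreeGroup.of g ^ 3)⁻¹) (Set.mem_insert_of_mem _ rfl)
  simpa [map_mul, map_inv, map_pow, PresentedGroup.of] using this

lemma rel1_eq_one :
    ⁅(PresentedGroup.of d : Gp) * .of g * (.of d)⁻¹, (PresentedGroup.of g : Gp)⁆ = 1 := by
  have := mk_rel_one (r := ⁅FreeGroup.of d * FreeGroup.of g * (FreeGroup.of d)⁻¹,
      FreeGroup.of g⁆) (Set.mem_insert _ _)
  simpa [commutatorElement_def, map_mul, map_inv, PresentedGroup.of] using this

lemma char_g_eq_one (ξ : Gp →* ℂˣ) : ξ (PresentedGroup.of g) = 1 := by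
  have h := congrArg ξ rel2_eq_one
  simp only [map_mul, map_inv, map_pow, map_one] at h
  have hC := congrArg (Units.val) h
  push_cast at hC
  set x : ℂ := ((ξ (PresentedGroup.of g) : ℂˣ) : ℂ) with hx
  set y : ℂ := ((ξ (PresentedGroup.of d) : ℂˣ) : ℂ) with hy
  have hx0 : x ≠ 0 := Units.ne_zero _
  have hy0 : y ≠ 0 := Units.ne_zero _
  field_simp at hC
  have hx1 : x = 1 := by
    have h1 : x * x * 1 = x * x * x := by linear_combination x * x * hC
    exact (mul_left_cancel₀ (mul_ne_zero hx0 hx0) h1).symm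
  exact Units.ext hx1

@[ext] structure Aff : Type where
  u : ℂˣ
  v : ℂ

namespace Aff
instance : Mul Aff := ⟨fun p q => ⟨p.u * q.u, p.v + (p.u : ℂ) * q.v⟩⟩
instance : One Aff := ⟨⟨1, 0⟩⟩
instance : Inv Aff := ⟨fun p => ⟨p.u⁻¹, -((((p.u)⁻¹ : ℂˣ) : ℂ) * p.v)⟩⟩
@[simp] lemma mul_u (p q : Aff) : (p*q).u = p.u*q.u := rfl
@[simp] lemma mul_v (p q : Aff) : (p*q).v = p.v + (p.u:ℂ)*q.v := rfl
@[simp] lemma one_u : (1:Aff).u = 1 := rfl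
@[simp] lemma one_v : (1:Aff).v = 0 := rfl
@[simp] lemma inv_u (p:Aff) : p⁻¹.u = (p.u)⁻¹ := rfl
@[simp] lemma inv_v (p:Aff) : p⁻¹.v = -((((p.u)⁻¹ : ℂˣ):ℂ) * p.v) := rfl

instance : Group Aff where
  mul_assoc p q r := by ext <;> simp <;> ring
  one_mul p := by ext <;> simp
  mul_one p := by ext <;> simp
  inv_mul_cancel p := by
    ext <;> simp

def fst : Aff →* ℂˣ := { toFun := u, map_one' := rfl, map_mul' := fun _ _ => rfl }
@[simp] lemma fst_apply (p : Aff) : fst p = p.u := rfl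
end Aff

def affMap (T : ℂˣ) (a b : ℂ) : GenGD → Aff
  | .g => ⟨1, a⟩
  | .d => ⟨T, b⟩

lemma affRels (T : ℂˣ) (a b : ℂ)
    (hcond : ((T:ℂ))⁻¹ * a + (T:ℂ) * a - 3 * a = 0) :
    ∀ r ∈ relsGD, FreeGroup.lift (affMap T a b) r = 1 := by
  have hT : (T:ℂ) ≠ 0 := Units.ne_zero T
  rintro r hr
  rcases hr with rfl | rfl
  · ext
    · simp [commutatorElement_def, affMap]
    · simp [commutatorElement_def, affMap, Units.val_inv_eq_inv_val]
      field_simp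
      ring
  · ext
    · simp [affMap, pow_succ]
    · simp [affMap, Units.val_inv_eq_inv_val, pow_succ, pow_zero]
      field_simp
      field_simp at hcond
      linear_combination hcond

open groupCohomology

/-- the 1-coboundaries, as a submodule of the 1-cocycles -/
noncomputable def oneCoboundaries {G : Type} [Group G] (A : Rep ℂ G) :
    Submodule ℂ (cocycles₁ A) :=
  LinearMap.range ((d₀₁ A).hom.codRestrict (cocycles₁ A) fun c => d₀₁_apply_mem_cocycles₁ c)

section Cocycles
variable (ξ : Gp →* ℂˣ)

/-- value of a cocycle, seen in `ℂ` -/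
noncomputable def fval (f : cocycles₁ (charRep ξ)) (x : Gp) : ℂ := show ℂ from f x

lemma fmul (f : cocycles₁ (charRep ξ)) (x y : Gp) :
    fval ξ f (x * y) = (ξ x : ℂ) * fval ξ f y + fval ξ f x :=
  (mem_cocycles₁_iff (A := charRep ξ) f).1 f.2 x y

lemma finv (f : cocycles₁ (charRep ξ)) (x : Gp) :
    fval ξ f x⁻¹ = -((((ξ x)⁻¹ : ℂˣ)) : ℂ) * fval ξ f x := by
  have h : (ξ x : ℂ) * fval ξ f x⁻¹ = - fval ξ f x := cocycles₁_map_inv f x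
  have hx0 : (ξ x : ℂ) ≠ 0 := Units.ne_zero _
  refine mul_left_cancel₀ hx0 ?_
  rw [h, Units.val_inv_eq_inv_val]
  field_simp

lemma fone (f : cocycles₁ (charRep ξ)) : fval ξ f 1 = 0 :=
  cocycles₁_map_one f

lemma cocycle_zero (f : cocycles₁ (charRep ξ)) (hga : fval ξ f (PresentedGroup.of g) = 0)
    (hdb : fval ξ f (PresentedGroup.of d) = 0) (x : Gp) : fval ξ f x = 0 := by
  let S : Subgroup Gp :=
    { carrier := {x | fval ξ f x = 0}
      one_mem' := fone ξ f
      mul_mem' := fun {x y} hx hy => by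
        have := fmul ξ f x y
        simp only [Set.mem_setOf_eq] at hx hy ⊢
        rw [this, hx, hy, mul_zero, add_zero]
      inv_mem' := fun {x} hx => by
        have := finv ξ f x
        simp only [Set.mem_setOf_eq] at hx ⊢
        rw [this, hx, mul_zero] }
  exact PresentedGroup.generated_by relsGD S (fun j => by cases j <;> assumption) x

/-- relator 2 forces `a (t² - 3t + 1) = 0` -/
lemma cocycle_rel (f : cocycles₁ (charRep ξ)) :
    fval ξ f (PresentedGroup.of g) *
      (((ξ (PresentedGroup.of d) : ℂ))^2 - 3 * ((ξ (PresentedGroup.of d) : ℂ)) + 1) = 0 := by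
  have hgone : ξ (PresentedGroup.of g) = 1 := char_g_eq_one ξ
  have h0 : fval ξ f ((((PresentedGroup.of d : Gp)⁻¹ * .of g * .of d) * (.of d * .of g * (.of d)⁻¹)
      * ((PresentedGroup.of g : Gp) ^ 3)⁻¹)) = 0 := by
    rw [rel2_eq_one]; exact fone ξ f
  set t : ℂ := ((ξ (PresentedGroup.of d) : ℂˣ) : ℂ) with ht
  have ht0 : t ≠ 0 := Units.ne_zero _
  set a : ℂ := fval ξ f (PresentedGroup.of g) with ha
  simp only [pow_succ, pow_zero, one_mul] at h0
  simp only [fmul, finv, map_mul, map_inv, hgone, inv_mul_cancel, mul_inv_cancel,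
    Units.val_inv_eq_inv_val, inv_inv, map_one, Units.val_one, inv_one, one_mul, mul_one] at h0
  rw [← ht, ← ha] at h0
  field_simp at h0
  linear_combination h0

section Construct
variable (a b : ℂ)
  (hcond : ((ξ (PresentedGroup.of d) : ℂ))⁻¹ * a + (ξ (PresentedGroup.of d) : ℂ) * a - 3 * a = 0)

noncomputable def affHom : Gp →* Aff :=
  PresentedGroup.toGroup (affRels (ξ (PresentedGroup.of d)) a b hcond)

lemma affHom_u (x : Gp) : (affHom ξ a b hcond x).u = ξ x := by
  have : Aff.fst.comp (affHom ξ a b hcond) = ξ := by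
    refine PresentedGroup.ext fun j => ?_
    cases j
    · show Aff.fst (affHom ξ a b hcond (PresentedGroup.of g)) = _
      rw [char_g_eq_one ξ]
      simp [affHom, PresentedGroup.toGroup.of, affMap]
    · show Aff.fst (affHom ξ a b hcond (PresentedGroup.of d)) = _
      simp [affHom, PresentedGroup.toGroup.of, affMap]
  exact DFunLike.congr_fun this x

noncomputable def cocycleOf : cocycles₁ (charRep ξ) :=
  ⟨fun x => (affHom ξ a b hcond x).v, by
    refine (mem_cocycles₁_iff _).2 ?_
    intro x y
    show (affHom ξ a b hcond (x * y)).v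
        = (ξ x : ℂ) * (affHom ξ a b hcond y).v + (affHom ξ a b hcond x).v
    rw [map_mul]
    rw [Aff.mul_v, affHom_u]
    ring⟩

lemma cocycleOf_g : fval ξ (cocycleOf ξ a b hcond) (PresentedGroup.of g) = a := by
  show (affHom ξ a b hcond (PresentedGroup.of g)).v = a
  simp [affHom, PresentedGroup.toGroup.of, affMap]

lemma cocycleOf_d : fval ξ (cocycleOf ξ a b hcond) (PresentedGroup.of d) = b := by
  show (affHom ξ a b hcond (PresentedGroup.of d)).v = b
  simp [affHom, PresentedGroup.toGroup.of, affMap]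

end Construct

/-- evaluation at `x` as a linear map -/
noncomputable def ev (x : Gp) : cocycles₁ (charRep ξ) →ₗ[ℂ] ℂ where
  toFun f := fval ξ f x
  map_add' f g := rfl
  map_smul' c f := rfl

noncomputable def Phi : cocycles₁ (charRep ξ) →ₗ[ℂ] ℂ × ℂ :=
  (ev ξ (PresentedGroup.of g)).prod (ev ξ (PresentedGroup.of d))

lemma Phi_inj : Function.Injective (Phi ξ) := by
  rw [← LinearMap.ker_eq_bot, LinearMap.ker_eq_bot']
  intro f hf
  have h1 : fval ξ f (PresentedGroup.of g) = 0 := congrArg Prod.fst hf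
  have h2 : fval ξ f (PresentedGroup.of d) = 0 := congrArg Prod.snd hf
  exact Subtype.ext (funext fun x => cocycle_zero ξ f h1 h2 x)

noncomputable instance : FiniteDimensional ℂ (cocycles₁ (charRep ξ)) :=
  FiniteDimensional.of_injective (Phi ξ) (Phi_inj ξ)

noncomputable def beta : ℂ →ₗ[ℂ] cocycles₁ (charRep ξ) :=
  (d₀₁ (charRep ξ)).hom.codRestrict (cocycles₁ (charRep ξ)) fun c =>
    d₀₁_apply_mem_cocycles₁ c

lemma range_beta : LinearMap.range (beta ξ) = oneCoboundaries (charRep ξ) := rfl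

lemma beta_val (x : ℂ) (y : Gp) : fval ξ (beta ξ x) y = (ξ y : ℂ) * x - x := rfl

lemma beta_inj (htne : (ξ (PresentedGroup.of d) : ℂ) ≠ 1) :
    Function.Injective (beta ξ) := by
  rw [← LinearMap.ker_eq_bot, LinearMap.ker_eq_bot']
  intro x hx
  have h : fval ξ (beta ξ x) (PresentedGroup.of d) = 0 := by rw [hx]; rfl
  rw [beta_val] at h
  have := sub_eq_zero.1 h
  by_contra hx0
  exact htne (mul_right_cancel₀ hx0 (by rw [one_mul]; exact this))

lemma finrank_cobound (htne : (ξ (PresentedGroup.of d) : ℂ) ≠ 1) :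
    Module.finrank ℂ (oneCoboundaries (charRep ξ)) = 1 := by
  rw [← range_beta, LinearMap.finrank_range_of_inj (beta_inj ξ htne), Module.finrank_self]

lemma finrank_cocycles_root (hroot : ((ξ (PresentedGroup.of d) : ℂ))^2
      - 3 * (ξ (PresentedGroup.of d) : ℂ) + 1 = 0) :
    Module.finrank ℂ (cocycles₁ (charRep ξ)) = 2 := by
  have ht0 : ((ξ (PresentedGroup.of d)):ℂ) ≠ 0 := Units.ne_zero _
  have hsurj : Function.Surjective (Phi ξ) := by
    rintro ⟨a, b⟩
    have hcond : ((ξ (PresentedGroup.of d) : ℂ))⁻¹ * a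
        + (ξ (PresentedGroup.of d) : ℂ) * a - 3 * a = 0 := by
      field_simp
      linear_combination a * hroot
    exact ⟨cocycleOf ξ a b hcond, Prod.ext (cocycleOf_g ξ a b hcond) (cocycleOf_d ξ a b hcond)⟩
  have := (LinearEquiv.ofBijective (Phi ξ) ⟨Phi_inj ξ, hsurj⟩).finrank_eq
  rw [this]
  simp [Module.finrank_prod]

lemma finrank_cocycles_nonroot
    (htne : (ξ (PresentedGroup.of d) : ℂ) ≠ 1)
    (hnroot : ((ξ (PresentedGroup.of d) : ℂ))^2
      - 3 * (ξ (PresentedGroup.of d) : ℂ) + 1 ≠ 0) :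
    Module.finrank ℂ (cocycles₁ (charRep ξ)) = 1 := by
  have hinj : Function.Injective (ev ξ (PresentedGroup.of d)) := by
    rw [← LinearMap.ker_eq_bot, LinearMap.ker_eq_bot']
    intro f hf
    have h2 : fval ξ f (PresentedGroup.of d) = 0 := hf
    have h1 : fval ξ f (PresentedGroup.of g) = 0 := by
      have := cocycle_rel ξ f
      exact (mul_eq_zero.1 this).resolve_right hnroot
    exact Subtype.ext (funext fun x => cocycle_zero ξ f h1 h2 x)
  have hle : Module.finrank ℂ (cocycles₁ (charRep ξ)) ≤ 1 := by
    simpa using LinearMap.finrank_le_finrank_of_injective hinj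
  have hge : 1 ≤ Module.finrank ℂ (cocycles₁ (charRep ξ)) := by
    have := Submodule.finrank_le (oneCoboundaries (charRep ξ))
    rw [finrank_cobound ξ htne] at this
    exact this
  omega

lemma h1dim_formula :
    Module.finrank ℂ (groupCohomology (charRep ξ) 1)
        + Module.finrank ℂ (oneCoboundaries (charRep ξ))
      = Module.finrank ℂ (cocycles₁ (charRep ξ)) := by
  rw [(groupCohomology.H1Iso (charRep ξ)).toLinearEquiv.finrank_eq]
  exact Submodule.finrank_quotient_add_finrank (oneCoboundaries (charRep ξ))

end Cocycles


lemma char_ne_one (ξ : Gp →* ℂˣ) (hnt : ∃ x, ξ x ≠ 1) :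
    ((ξ (PresentedGroup.of d) : ℂ)) ≠ 1 := by
  intro h1
  have hd : ξ (PresentedGroup.of d) = 1 := Units.ext h1
  have : ξ = 1 := PresentedGroup.ext fun j => by
    cases j
    · rw [char_g_eq_one ξ]; rfl
    · rw [hd]; rfl
  obtain ⟨x, hx⟩ := hnt
  exact hx (by rw [this]; rfl)


/-- For `G = ⟨γ, δ ∣ [δγδ⁻¹, γ] = 1, (δ⁻¹γδ)(δγδ⁻¹) = γ³⟩`: every character of
`G` kills `γ`, and for a nontrivial character `ξ` with `t = ξ(δ)` one has
`t ≠ 1`, and `dim_ℂ H¹(G; ℂ_ξ)` is `1` if `t² − 3t + 1 = 0` and `0` otherwise.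
In particular the nontrivial part of `Char₁(G)` consists exactly of the two
(non-torsion) characters with `ξ(δ)` a root of `t² − 3t + 1`. -/
theorem char_var_torus_bundle :
    (∀ ξ : PresentedGroup relsGD →* ℂˣ,
      ξ (PresentedGroup.of GenGD.g) = 1) ∧
    ∀ ξ : PresentedGroup relsGD →* ℂˣ, (∃ x, ξ x ≠ 1) →
      ∀ t : ℂ, t = (ξ (PresentedGroup.of GenGD.d) : ℂ) →
        t ≠ 1 ∧
        (t ^ 2 - 3 * t + 1 = 0 → h1dim ξ = 1) ∧
        (t ^ 2 - 3 * t + 1 ≠ 0 → h1dim ξ = 0) := by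
  refine ⟨fun ξ => char_g_eq_one ξ, ?_⟩
  intro ξ hnt t htdef
  subst htdef
  have htne := char_ne_one ξ hnt
  refine ⟨htne, fun hroot => ?_, fun hnroot => ?_⟩
  · have h := h1dim_formula ξ
    rw [finrank_cobound ξ htne, finrank_cocycles_root ξ hroot] at h
    show Module.finrank ℂ (groupCohomology (charRep ξ) 1) = 1
    omega
  · have h := h1dim_formula ξ
    rw [finrank_cobound ξ htne, finrank_cocycles_nonroot ξ htne hnroot] at h
    show Module.finrank ℂ (groupCohomology (charRep ξ) 1) = 0
    omega
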